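/- Let ν ∈ (0,1), L_ν > 0, L > 0 and δ ≥ 0. Then for all real x, y ≥ 0: L_ν x^ν y + δ y − (L/2)(x² + y²) ≤ max{ (2ν)^{ν/(1−ν)} (2 − ν^{1/ν}) L_ν^{2/(1−ν)} / L^{(1+ν)/(1−ν)}, δ² (2 − ν^{1/ν}) / L }. -/

import Mathlib

/-- maximum of the concave function
`f(x,y) = L_ν x^ν y + δ y − (L/2)(x² + y²)` over the nonnegative quadrant. -/
theorem holder_quadratic_noisy_max_bound (ν Lν L δ : ℝ) (hν : ν ∈ Set.Ioo (0 : ℝ) 1)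
    (hLν : 0 < Lν) (hL : 0 < L) (hδ : 0 ≤ δ) (x y : ℝ) (hx : 0 ≤ x) (hy : 0 ≤ y) :
    Lν * x ^ ν * y + δ * y - L / 2 * (x ^ 2 + y ^ 2) ≤
      max ((2 * ν) ^ (ν / (1 - ν)) * (2 - ν ^ (1 / ν)) * Lν ^ (2 / (1 - ν)) /
            L ^ ((1 + ν) / (1 - ν)))
          (δ ^ 2 * (2 - ν ^ (1 / ν)) / L) := by
  obtain ⟨hν0, hν1⟩ := hν
  have hε : (0:ℝ) < 1 - ν := by linarith
  set A0 : ℝ := (2 * ν) ^ (ν / (1 - ν)) * Lν ^ (2 / (1 - ν)) / L ^ ((1 + ν) / (1 - ν)) with hA0def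
  have h2ν : (0:ℝ) < 2 * ν := by linarith
  have hA0pos : 0 < A0 := by
    apply div_pos (mul_pos (Real.rpow_pos_of_pos h2ν _) (Real.rpow_pos_of_pos hLν _))
      (Real.rpow_pos_of_pos hL _)
  set B : ℝ := δ ^ 2 / L with hBdef
  have hBnn : 0 ≤ B := by positivity
  have ht : 0 ≤ x ^ ν := Real.rpow_nonneg hx ν
  -- Step A : reduce to one-variable problem
  have stepA : Lν * x ^ ν * y + δ * y - L / 2 * (x ^ 2 + y ^ 2) ≤
      Lν ^ 2 * (x ^ ν) ^ 2 / L + B - L / 2 * x ^ 2 := by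
    have h1 : (Lν * x ^ ν + δ) * y - L / 2 * y ^ 2 ≤ (Lν * x ^ ν + δ) ^ 2 / (2 * L) := by
      rw [le_div_iff₀ (by linarith)]
      nlinarith [sq_nonneg (Lν * x ^ ν + δ - L * y)]
    have h2 : (Lν * x ^ ν + δ) ^ 2 / (2 * L) ≤ (Lν * x ^ ν) ^ 2 / L + δ ^ 2 / L := by
      rw [← add_div, div_le_div_iff₀ (by linarith) hL]
      nlinarith [sq_nonneg (Lν * x ^ ν - δ)]
    have : Lν ^ 2 * (x ^ ν) ^ 2 = (Lν * x ^ ν) ^ 2 := by ring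
    rw [hBdef, this]
    nlinarith [h1.trans h2]
  -- rewrite (x^ν)^2 as (x^2)^ν
  set s : ℝ := x ^ 2 with hsdef
  have hs : 0 ≤ s := sq_nonneg x
  have hpow : (x ^ ν) ^ 2 = s ^ ν := by
    rw [hsdef, ← Real.rpow_natCast (x ^ ν) 2, ← Real.rpow_natCast x 2,
      ← Real.rpow_mul hx, ← Real.rpow_mul hx]
    norm_num [mul_comm]
  rw [hpow] at stepA
  -- the maximizer of the one-variable problem
  set S : ℝ := (2 * ν * Lν ^ 2 / L ^ 2) ^ ((1:ℝ) / (1 - ν)) with hSdef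
  have hbase : (0:ℝ) < 2 * ν * Lν ^ 2 / L ^ 2 := by positivity
  have hS : 0 < S := Real.rpow_pos_of_pos hbase _
  have hS1 : S ^ ((1:ℝ) - ν) = 2 * ν * Lν ^ 2 / L ^ 2 := by
    rw [hSdef, ← Real.rpow_mul hbase.le, one_div, inv_mul_cancel₀ hε.ne', Real.rpow_one]
  have hSexp : S ^ (ν - 1) = L ^ 2 / (2 * ν * Lν ^ 2) := by
    have : S ^ (ν - 1) = (S ^ ((1:ℝ) - ν))⁻¹ := by
      rw [← Real.rpow_neg hS.le]; ring_nf
    rw [this, hS1, inv_div]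
  have hSν : S ^ ν = L ^ 2 / (2 * ν * Lν ^ 2) * S := by
    have h : S ^ ν = S ^ (ν - 1) * S := by
      nth_rewrite 3 [← Real.rpow_one S]
      rw [← Real.rpow_add hS]; ring_nf
    rw [h, hSexp]
  -- identification of the optimal value with A0
  have hCS : Lν ^ 2 / L * S ^ ν = A0 := by
    have hLHS : 0 < Lν ^ 2 / L * S ^ ν := by positivity
    apply Real.log_injOn_pos (Set.mem_Ioi.mpr hLHS) (Set.mem_Ioi.mpr hA0pos)
    rw [hA0def, Real.log_mul (by positivity) (by positivity),
      Real.log_div (by positivity) (by positivity),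
      Real.log_div (by positivity) (by positivity),
      Real.log_mul (by positivity) (by positivity),
      Real.log_rpow hS, Real.log_rpow h2ν, Real.log_rpow hLν, Real.log_rpow hL,
      hSdef, Real.log_rpow hbase,
      Real.log_div (by positivity) (by positivity),
      Real.log_mul (by positivity) (by positivity),
      Real.log_pow, Real.log_pow]
    push_cast
    field_simp
    ring
  -- Step B : concavity bound in s
  have stepB : Lν ^ 2 * s ^ ν / L - L / 2 * s ≤ (1 - ν) * A0 := by
    have hgm : (s / S) ^ ν * (1:ℝ) ^ (1 - ν) ≤ ν * (s / S) + (1 - ν) * 1 :=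
      Real.geom_mean_le_arith_mean2_weighted hν0.le hε.le (by positivity) zero_le_one
        (by ring)
    rw [Real.one_rpow, mul_one, mul_one] at hgm
    have hsplit : s ^ ν = S ^ ν * (s / S) ^ ν := by
      rw [← Real.mul_rpow hS.le (by positivity), mul_div_cancel₀ _ hS.ne']
    have hub : s ^ ν ≤ S ^ ν * (ν * (s / S) + (1 - ν)) := by
      rw [hsplit]
      exact mul_le_mul_of_nonneg_left hgm (Real.rpow_pos_of_pos hS ν).le
    have hC : (0:ℝ) ≤ Lν ^ 2 / L := by positivity
    have hmain : Lν ^ 2 / L * s ^ ν ≤ Lν ^ 2 / L * (S ^ ν * (ν * (s / S) + (1 - ν))) :=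
      mul_le_mul_of_nonneg_left hub hC
    have hkey : Lν ^ 2 / L * (S ^ ν * (ν * (s / S) + (1 - ν))) =
        L / 2 * s + (1 - ν) * (Lν ^ 2 / L * S ^ ν) := by
      rw [hSν]; field_simp
    rw [hkey, hCS] at hmain
    have : Lν ^ 2 * s ^ ν / L = Lν ^ 2 / L * s ^ ν := by ring
    rw [this]; linarith
  -- combine
  have hm : ν ^ (1 / ν) ≤ ν := by
    have h1 : (1:ℝ) ≤ 1 / ν := by rw [le_div_iff₀ hν0]; linarith
    calc ν ^ (1 / ν) ≤ ν ^ (1:ℝ) := Real.rpow_le_rpow_of_exponent_ge hν0 hν1.le h1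
    _ = ν := Real.rpow_one ν
  set M : ℝ := max A0 B with hMdef
  have hMnn : 0 ≤ M := le_trans hBnn (le_max_right _ _)
  have hgoal : max ((2 * ν) ^ (ν / (1 - ν)) * (2 - ν ^ (1 / ν)) * Lν ^ (2 / (1 - ν)) /
      L ^ ((1 + ν) / (1 - ν))) (δ ^ 2 * (2 - ν ^ (1 / ν)) / L) = (2 - ν ^ (1 / ν)) * M := by
    have e1 : (2 * ν) ^ (ν / (1 - ν)) * (2 - ν ^ (1 / ν)) * Lν ^ (2 / (1 - ν)) /
        L ^ ((1 + ν) / (1 - ν)) = A0 * (2 - ν ^ (1 / ν)) := by rw [hA0def]; ring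
    have e2 : δ ^ 2 * (2 - ν ^ (1 / ν)) / L = B * (2 - ν ^ (1 / ν)) := by rw [hBdef]; ring
    rw [e1, e2, ← max_mul_of_nonneg _ _ (by linarith : (0:ℝ) ≤ 2 - ν ^ (1 / ν)), hMdef]
    ring
  rw [hgoal]
  have hA0M : A0 ≤ M := le_max_left _ _
  have hBM : B ≤ M := le_max_right _ _
  have hfinal : (1 - ν) * A0 + B ≤ (2 - ν ^ (1 / ν)) * M := by
    have h1 : (1 - ν) * A0 ≤ (1 - ν) * M := mul_le_mul_of_nonneg_left hA0M hε.le
    have h2 : (2 - ν) * M ≤ (2 - ν ^ (1 / ν)) * M :=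
      mul_le_mul_of_nonneg_right (by linarith) hMnn
    have h3 : (1 - ν) * M + M = (2 - ν) * M := by ring
    linarith
  linarith
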